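/- Let d ≥ 2, let ℓ₁,…,ℓ_d be linear forms on ℝⁿ, let e ∈ ℝⁿ satisfy ℓᵢ(e) = 1 for all i, and set p(x) = ℓ₁(x)·ℓ₂(x)⋯ℓ_d(x). For x ∈ ℝⁿ define the (d−1)×(d−1) matrix M(x) with M(x)ᵢᵢ = ℓᵢ(x) + ℓ_d(x) and M(x)ᵢⱼ = ℓ_d(x) for i ≠ j. Then det M(x) = ⟨∇p(x), e⟩ = E_{d−1}(ℓ₁(x),…,ℓ_d(x)) as an identity of polynomials in x; that is, the first polar of the product of linear forms has a symmetric determinantal representation given by M(x). -/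

import Mathlib

/-- The `k`-th elementary symmetric function of `y : Fin d → ℝ`. -/
noncomputable def esymm {d : ℕ} (k : ℕ) (y : Fin d → ℝ) : ℝ :=
  ∑ s ∈ Finset.powersetCard k (Finset.univ : Finset (Fin d)), ∏ i ∈ s, y i

lemma det_diag_updateRow {m : ℕ} (a : Fin m → ℝ) (j : Fin m) (b : ℝ) :
    ((Matrix.diagonal a).updateRow j (fun _ => b)).det
      = b * ∏ i ∈ Finset.univ.erase j, a i := by
  classical
  have hconst : (fun _ : Fin m => b) = ∑ k : Fin m, Pi.single k b := by
    ext l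
    rw [Finset.sum_apply]
    simp [Pi.single_apply]
  have hsum : ((Matrix.diagonal a).updateRow j (fun _ => b)).det
      = ∑ k : Fin m, ((Matrix.diagonal a).updateRow j (Pi.single k b)).det := by
    rw [hconst]
    exact (Matrix.detRowAlternating (R := ℝ) (n := Fin m)).toMultilinearMap.map_update_sum
      Finset.univ j (fun k => Pi.single k b) (Matrix.diagonal a)
  rw [hsum]
  have hterm : ∀ k : Fin m, k ≠ j →
      ((Matrix.diagonal a).updateRow j (Pi.single k b)).det = 0 := by
    intro k hkj
    have h1 : (Pi.single k b : Fin m → ℝ) = b • (Pi.single k 1 : Fin m → ℝ) := by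
      ext l; simp [Pi.single_apply]
    rw [h1, Matrix.det_updateRow_smul]
    set B := (Matrix.diagonal a).updateRow j ((Pi.single k 1 : Fin m → ℝ)) with hB
    have hBk : B k = a k • (Pi.single k 1 : Fin m → ℝ) := by
      ext l
      simp [hB, Matrix.updateRow_apply, hkj, Matrix.diagonal_apply, Pi.single_apply, eq_comm]
    have : B.det = a k * (B.updateRow k ((Pi.single k 1 : Fin m → ℝ))).det := by
      conv_lhs => rw [← Matrix.updateRow_eq_self B k, hBk, Matrix.det_updateRow_smul]
    rw [this, Matrix.det_zero_of_row_eq (Ne.symm hkj)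
      (by rw [Matrix.updateRow_ne (Ne.symm hkj), Matrix.updateRow_self, hB,
        Matrix.updateRow_self])]
    ring
  rw [Finset.sum_eq_single j (fun k _ hk => hterm k hk) (by simp)]
  have : (Matrix.diagonal a).updateRow j (Pi.single j b)
      = Matrix.diagonal (Function.update a j b) := by
    ext i l
    by_cases hij : i = j
    · subst hij
      simp [Matrix.updateRow_self, Matrix.diagonal_apply, Pi.single_apply, eq_comm]
    · simp [Matrix.updateRow_ne hij, Matrix.diagonal_apply, Function.update_of_ne hij]
  rw [this, Matrix.det_diagonal, Finset.prod_update_of_mem (Finset.mem_univ j), Finset.sdiff_singleton_eq_erase]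

lemma key1 {m : ℕ} (a : Fin m → ℝ) (b : ℝ) :
    (Matrix.of fun i j : Fin m => if i = j then a i + b else b).det
      = (∏ i, a i) + ∑ j, b * ∏ i ∈ Finset.univ.erase j, a i := by
  classical
  set u : Fin m → Fin m → ℝ := fun i => Pi.single i (a i) with hu
  set v : Fin m → Fin m → ℝ := fun _ _ => b with hv
  have hM : (Matrix.of fun i j : Fin m => if i = j then a i + b else b) = u + v := by
    ext i j
    by_cases h : i = j
    · subst h; simp [hu, hv, Pi.single_apply]
    · simp [hu, hv, Pi.single_apply, h, Ne.symm h]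
  have expand : Matrix.det (u + v)
      = ∑ s : Finset (Fin m), Matrix.det (s.piecewise u v) :=
    (Matrix.detRowAlternating (R := ℝ) (n := Fin m)).toMultilinearMap.map_add_univ u v
  rw [hM, expand]
  set S : Finset (Finset (Fin m)) :=
    insert Finset.univ (Finset.univ.image fun j : Fin m => Finset.univ.erase j) with hS
  have hzero : ∀ s : Finset (Fin m), s ∉ S → Matrix.det (s.piecewise u v) = 0 := by
    intro s hs
    have hcard : 1 < sᶜ.card := by
      by_contra h
      push_neg at h
      interval_cases hc : sᶜ.card
      · have : s = Finset.univ := by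
          rwa [← Finset.compl_eq_empty_iff, ← Finset.card_eq_zero]
        exact hs (by rw [this, hS]; exact Finset.mem_insert_self _ _)
      · obtain ⟨i, hi⟩ := Finset.card_eq_one.mp hc
        have : s = Finset.univ.erase i := by
          rw [← Finset.compl_singleton, ← hi, compl_compl]
        exact hs (by
          rw [this, hS]
          exact Finset.mem_insert_of_mem (Finset.mem_image_of_mem _ (Finset.mem_univ i)))
    obtain ⟨i, hi, k, hk, hik⟩ := Finset.one_lt_card.mp hcard
    refine Matrix.det_zero_of_row_eq hik ?_
    rw [Finset.piecewise_eq_of_notMem _ _ _ (Finset.mem_compl.mp hi),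
      Finset.piecewise_eq_of_notMem _ _ _ (Finset.mem_compl.mp hk)]
  rw [← Finset.sum_subset (Finset.subset_univ S) (fun s _ hs => hzero s hs)]
  have huniv_nm : Finset.univ ∉ Finset.univ.image fun j : Fin m => Finset.univ.erase j := by
    intro hmem
    obtain ⟨j, -, hj⟩ := Finset.mem_image.mp hmem
    have h2 := Finset.notMem_erase j (Finset.univ : Finset (Fin m))
    rw [hj] at h2
    exact h2 (Finset.mem_univ j)
  have hinj : ∀ j ∈ (Finset.univ : Finset (Fin m)), ∀ j' ∈ (Finset.univ : Finset (Fin m)),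
      Finset.univ.erase j = Finset.univ.erase j' → j = j' := by
    intro j _ j' _ h
    by_contra hne
    have h2 := Finset.notMem_erase j' (Finset.univ : Finset (Fin m))
    rw [← h] at h2
    exact h2 (Finset.mem_erase.mpr ⟨Ne.symm hne, Finset.mem_univ j'⟩)
  rw [hS, Finset.sum_insert huniv_nm, Finset.sum_image hinj]
  congr 1
  · have hpw : (Finset.univ.piecewise u v : Fin m → Fin m → ℝ) = Matrix.diagonal a := by
      rw [Finset.piecewise_univ]
      ext i l
      simp [hu, Matrix.diagonal_apply, Pi.single_apply, eq_comm]
    rw [hpw, Matrix.det_diagonal]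
  · refine Finset.sum_congr rfl fun j _ => ?_
    have hpw : ((Finset.univ.erase j).piecewise u v : Fin m → Fin m → ℝ)
        = (Matrix.diagonal a).updateRow j (fun _ => b) := by
      ext i l
      by_cases hij : i = j
      · subst hij
        rw [Finset.piecewise_eq_of_notMem _ _ _ (Finset.notMem_erase i _)]
        simp [hv]
      · rw [Finset.piecewise_eq_of_mem _ _ _
          (Finset.mem_erase.mpr ⟨hij, Finset.mem_univ i⟩), Matrix.updateRow_ne hij]
        simp [hu, Matrix.diagonal_apply, Pi.single_apply, eq_comm]
    rw [hpw, det_diag_updateRow]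

lemma key2 (m : ℕ) (y : Fin (m + 1) → ℝ) :
    (∏ i : Fin m, y i.castSucc)
        + ∑ j : Fin m, y (Fin.last m) * ∏ i ∈ Finset.univ.erase j, y i.castSucc
      = ∑ i : Fin (m + 1), ∏ j ∈ Finset.univ.erase i, y j := by
  classical
  rw [Fin.sum_univ_castSucc]
  have hlast : (Finset.univ : Finset (Fin (m + 1))).erase (Fin.last m)
      = Finset.univ.image Fin.castSucc := by
    ext i
    constructor
    · intro h
      obtain ⟨hne, -⟩ := Finset.mem_erase.mp h
      obtain ⟨k, hk⟩ := Fin.exists_castSucc_eq.mpr hne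
      exact Finset.mem_image.mpr ⟨k, Finset.mem_univ k, hk⟩
    · intro h
      obtain ⟨k, -, rfl⟩ := Finset.mem_image.mp h
      exact Finset.mem_erase.mpr ⟨(Fin.castSucc_lt_last k).ne, Finset.mem_univ _⟩
  have hcs : ∀ j : Fin m, (Finset.univ : Finset (Fin (m + 1))).erase j.castSucc
      = insert (Fin.last m) ((Finset.univ.erase j).image Fin.castSucc) := by
    intro j
    ext i
    constructor
    · intro h
      have hne : i ≠ Fin.castSucc j := (Finset.mem_erase.mp h).1
      rcases eq_or_ne i (Fin.last m) with rfl | hlast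
      · exact Finset.mem_insert_self _ _
      · obtain ⟨k, hk⟩ := Fin.exists_castSucc_eq.mpr hlast
        refine Finset.mem_insert_of_mem (Finset.mem_image.mpr
          ⟨k, Finset.mem_erase.mpr ⟨?_, Finset.mem_univ k⟩, hk⟩)
        rintro rfl
        exact hne hk.symm
    · intro h
      rcases Finset.mem_insert.mp h with rfl | hmem
      · exact Finset.mem_erase.mpr ⟨(Fin.castSucc_lt_last j).ne', Finset.mem_univ _⟩
      · obtain ⟨k, hk, rfl⟩ := Finset.mem_image.mp hmem
        exact Finset.mem_erase.mpr
          ⟨fun hc => (Finset.mem_erase.mp hk).1 (Fin.castSucc_injective m hc),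
            Finset.mem_univ _⟩
  rw [hlast, Finset.prod_image (fun a _ b _ h => Fin.castSucc_injective m h)]
  rw [add_comm]
  congr 1
  refine Finset.sum_congr rfl fun j _ => ?_
  rw [hcs j, Finset.prod_insert (by
      simp only [Finset.mem_image]
      rintro ⟨k, -, hk⟩
      exact (Fin.castSucc_lt_last k).ne hk),
    Finset.prod_image (fun a _ b _ h => Fin.castSucc_injective m h)]

lemma key3 (m : ℕ) (y : Fin (m + 1) → ℝ) :
    esymm m y = ∑ i : Fin (m + 1), ∏ j ∈ Finset.univ.erase i, y j := by
  classical
  unfold esymm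
  have himg : Finset.powersetCard m (Finset.univ : Finset (Fin (m + 1)))
      = Finset.univ.image fun i : Fin (m + 1) => Finset.univ.erase i := by
    ext s
    simp only [Finset.mem_powersetCard, Finset.mem_image, Finset.mem_univ, true_and]
    constructor
    · rintro ⟨-, hcard⟩
      have hc : sᶜ.card = 1 := by
        have := Finset.card_compl s
        simp only [Fintype.card_fin] at this
        omega
      obtain ⟨i, hi⟩ := Finset.card_eq_one.mp hc
      exact ⟨i, by rw [← Finset.compl_singleton, ← hi, compl_compl]⟩
    · rintro ⟨i, rfl⟩
      exact ⟨Finset.subset_univ _, by simp⟩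
  have hinj : ∀ i ∈ (Finset.univ : Finset (Fin (m + 1))),
      ∀ i' ∈ (Finset.univ : Finset (Fin (m + 1))),
      Finset.univ.erase i = Finset.univ.erase i' → i = i' := by
    intro i _ i' _ h
    by_contra hne
    exact Finset.notMem_erase i' Finset.univ
      (h ▸ Finset.mem_erase.mpr ⟨Ne.symm hne, Finset.mem_univ i'⟩)
  rw [himg, Finset.sum_image hinj]

/-- The determinant of the matrix `M(x)` with `M(x)ᵢᵢ = ℓᵢ(x) + ℓ_d(x)` and
`M(x)ᵢⱼ = ℓ_d(x)` for `i ≠ j` equals the first polar `⟨∇p(x), e⟩` of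
`p = ℓ₁ ⋯ ℓ_d`, which in turn equals `E_{d-1}(ℓ₁(x),…,ℓ_d(x))`. -/
theorem stmt1 {n d : ℕ} (hd : 2 ≤ d) (ℓ : Fin d → ((Fin n → ℝ) →ₗ[ℝ] ℝ))
    (e : Fin n → ℝ) (he : ∀ i, ℓ i e = 1) (x : Fin n → ℝ) :
    (Matrix.of fun i j : Fin (d - 1) =>
        if i = j then
          ℓ (Fin.castLE (by omega) i) x + ℓ ⟨d - 1, by omega⟩ x
        else ℓ ⟨d - 1, by omega⟩ x).det
      = fderiv ℝ (fun y => ∏ i, ℓ i y) x e ∧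
    (Matrix.of fun i j : Fin (d - 1) =>
        if i = j then
          ℓ (Fin.castLE (by omega) i) x + ℓ ⟨d - 1, by omega⟩ x
        else ℓ ⟨d - 1, by omega⟩ x).det
      = esymm (d - 1) (fun i => ℓ i x) := by
  classical
  obtain ⟨m, rfl⟩ : ∃ m, d = m + 1 := ⟨d - 1, by omega⟩
  set y : Fin (m + 1) → ℝ := fun i => ℓ i x with hy
  have hdet : (Matrix.of fun i j : Fin (m + 1 - 1) =>
        if i = j then
          ℓ (Fin.castLE (by omega) i) x + ℓ ⟨m + 1 - 1, by omega⟩ x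
        else ℓ ⟨m + 1 - 1, by omega⟩ x).det
      = ∑ i : Fin (m + 1), ∏ j ∈ Finset.univ.erase i, y j :=
    (key1 (fun i : Fin m => y i.castSucc) (y (Fin.last m))).trans (key2 m y)
  have hfd : HasFDerivAt (fun z => ∏ i, ℓ i z)
      (∑ i, (∏ j ∈ Finset.univ.erase i, ℓ j x) •
        (LinearMap.toContinuousLinearMap (ℓ i))) x := by
    refine HasFDerivAt.finset_prod fun i _ => ?_
    have := (LinearMap.toContinuousLinearMap (ℓ i)).hasFDerivAt (x := x)
    simpa using this
  refine ⟨hdet.trans ?_, hdet.trans ?_⟩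
  · rw [hfd.fderiv]
    simp [he, hy]
  · exact (key3 m y).symm
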